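/- Let s ~ CN(0, λ) with λ > 0, let κ, λₚ, P > 0 and 0 ≤ τ ≤ τ̃ ≤ τ̂ be real thresholds, and define x = √P·s/|s| if |s| ≥ τ̂, x = 0 if τ̃ ≤ |s| < τ̂, x = s/(1+κλₚ) if τ ≤ |s| < τ̃, and x = 0 if |s| < τ. Then E[Re(x̄·s)] = Ξ/(1+κλₚ) + √P·τ̂·e^{−τ̂²/λ} + √(πλP)·Q(τ̂·√(2/λ)), where Ξ = (λ + τ²)·e^{−τ²/λ} − (λ + τ̃²)·e^{−τ̃²/λ} and Q(x) = ∫_x^∞ (1/√(2π))·e^{−t²/2} dt. -/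

import Mathlib

open MeasureTheory ProbabilityTheory

/-- The law of a circularly symmetric complex Gaussian `s = a + b·i` with variance `λ`,
modeled as the product of two real Gaussians `N(0, λ/2)` on the plane `ℝ × ℝ`. -/
noncomputable def complexGaussian (lam : ℝ) : Measure (ℝ × ℝ) :=
  (gaussianReal 0 (Real.toNNReal (lam / 2))).prod (gaussianReal 0 (Real.toNNReal (lam / 2)))

/-- The complex number corresponding to a point of the plane. -/
noncomputable def toC (p : ℝ × ℝ) : ℂ := (p.1 : ℂ) + (p.2 : ℂ) * Complex.I

/-- The standard Gaussian tail function `Q(x) = ∫_x^∞ (1/√(2π)) e^{−t²/2} dt`. -/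
noncomputable def Qfun (x : ℝ) : ℝ :=
  ∫ t in Set.Ioi x, (1 / Real.sqrt (2 * Real.pi)) * Real.exp (-(t ^ 2) / 2)

open Real Set Filter

section Aux

lemma complexGaussian_eq {lam : ℝ} (hlam : 0 < lam) :
    complexGaussian lam = (volume : Measure (ℝ × ℝ)).withDensity
      (fun p => ENNReal.ofReal ((Real.pi * lam)⁻¹ * Real.exp (-(p.1 ^ 2 + p.2 ^ 2) / lam))) := by
  have hv : (Real.toNNReal (lam / 2)) ≠ 0 := by
    simp [Real.toNNReal_eq_zero]; linarith
  have hvc : (((Real.toNNReal (lam / 2)) : NNReal) : ℝ) = lam / 2 :=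
    Real.coe_toNNReal _ (by linarith)
  set v := Real.toNNReal (lam / 2)
  have hpdf : ∀ x y : ℝ, ENNReal.ofReal ((Real.pi * lam)⁻¹ * Real.exp (-(x ^ 2 + y ^ 2) / lam))
      = gaussianPDF 0 v x * gaussianPDF 0 v y := by
    intro x y
    rw [gaussianPDF, gaussianPDF, gaussianPDFReal, gaussianPDFReal,
      ← ENNReal.ofReal_mul (by positivity)]
    congr 1
    rw [hvc]
    have h2v : 2 * Real.pi * (lam / 2) = Real.pi * lam := by ring
    rw [h2v]
    have hs : (Real.sqrt (Real.pi * lam))⁻¹ * (Real.sqrt (Real.pi * lam))⁻¹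
        = (Real.pi * lam)⁻¹ := by
      rw [← mul_inv, Real.mul_self_sqrt (by positivity)]
    have he : Real.exp (-(x - 0) ^ 2 / (2 * (lam / 2))) * Real.exp (-(y - 0) ^ 2 / (2 * (lam / 2)))
        = Real.exp (-(x ^ 2 + y ^ 2) / lam) := by
      rw [← Real.exp_add]
      congr 1
      field_simp
      ring
    calc (Real.pi * lam)⁻¹ * Real.exp (-(x ^ 2 + y ^ 2) / lam)
        = ((Real.sqrt (Real.pi * lam))⁻¹ * Real.exp (-(x - 0) ^ 2 / (2 * (lam / 2)))) *
          ((Real.sqrt (Real.pi * lam))⁻¹ * Real.exp (-(y - 0) ^ 2 / (2 * (lam / 2)))) := by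
          rw [← he, ← hs]; ring
      _ = _ := by ring
  symm
  rw [complexGaussian]
  symm
  apply Measure.prod_eq
  intro s t hs ht
  rw [withDensity_apply _ (hs.prod ht)]
  rw [Measure.volume_eq_prod, ← Measure.prod_restrict]
  have : ∀ p : ℝ × ℝ, ENNReal.ofReal ((Real.pi * lam)⁻¹ * Real.exp (-(p.1 ^ 2 + p.2 ^ 2) / lam))
      = gaussianPDF 0 v p.1 * gaussianPDF 0 v p.2 := fun p => hpdf p.1 p.2
  simp_rw [this]
  rw [lintegral_prod_mul ((measurable_gaussianPDF 0 v).aemeasurable)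
    ((measurable_gaussianPDF 0 v).aemeasurable)]
  rw [gaussianReal_of_var_ne_zero 0 hv, withDensity_apply _ hs, withDensity_apply _ ht]

lemma toC_abs (p : ℝ × ℝ) : ‖toC p‖ = Real.sqrt (p.1 ^ 2 + p.2 ^ 2) :=
  Complex.norm_add_mul_I p.1 p.2

lemma integral_radial {lam : ℝ} (hlam : 0 < lam) (φ : ℝ → ℝ) :
    ∫ p, φ (‖toC p‖) ∂(complexGaussian lam)
      = (2 / lam) * ∫ r in Ioi (0:ℝ), r * Real.exp (-(r ^ 2) / lam) * φ r := by
  rw [complexGaussian_eq hlam]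
  set ρ : ℝ × ℝ → ℝ := fun p => (Real.pi * lam)⁻¹ * Real.exp (-(p.1 ^ 2 + p.2 ^ 2) / lam) with hρ
  have hρ0 : ∀ p, 0 ≤ ρ p := fun p => by positivity
  have hρmeas : Measurable fun p => Real.toNNReal (ρ p) := by
    apply Measurable.real_toNNReal
    fun_prop
  have hcoe : (fun p : ℝ × ℝ => ENNReal.ofReal (ρ p))
      = fun p => ((Real.toNNReal (ρ p) : NNReal) : ENNReal) := rfl
  rw [hcoe, integral_withDensity_eq_integral_smul hρmeas]
  have h1 : ∀ p : ℝ × ℝ, (Real.toNNReal (ρ p)) • φ (‖toC p‖)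
      = ρ p * φ (Real.sqrt (p.1 ^ 2 + p.2 ^ 2)) := by
    intro p
    rw [NNReal.smul_def, Real.coe_toNNReal _ (hρ0 p), toC_abs, smul_eq_mul]
  simp_rw [h1]
  rw [← integral_comp_polarCoord_symm (fun p => ρ p * φ (Real.sqrt (p.1 ^ 2 + p.2 ^ 2)))]
  have htarget : polarCoord.target = Ioi (0:ℝ) ×ˢ Ioo (-Real.pi) Real.pi := rfl
  have hstep : ∫ q in polarCoord.target,
        q.1 • (ρ (polarCoord.symm q) * φ (Real.sqrt ((polarCoord.symm q).1 ^ 2 + (polarCoord.symm q).2 ^ 2)))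
      = ∫ q in Ioi (0:ℝ) ×ˢ Ioo (-Real.pi) Real.pi,
        (Real.pi * lam)⁻¹ * (q.1 * Real.exp (-(q.1 ^ 2) / lam) * φ q.1) := by
    rw [htarget]
    apply setIntegral_congr_fun (measurableSet_Ioi.prod measurableSet_Ioo)
    intro q hq
    have hq1 : 0 < q.1 := hq.1
    have hsym : polarCoord.symm q = (q.1 * Real.cos q.2, q.1 * Real.sin q.2) := rfl
    have hsq : (polarCoord.symm q).1 ^ 2 + (polarCoord.symm q).2 ^ 2 = q.1 ^ 2 := by
      rw [hsym]
      have := Real.sin_sq_add_cos_sq q.2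
      dsimp only
      nlinarith [this]
    dsimp only
    rw [hsq, Real.sqrt_sq hq1.le, hρ]
    dsimp only
    rw [hsq, smul_eq_mul]
    ring
  rw [hstep, Measure.volume_eq_prod, ← Measure.prod_restrict]
  have key := integral_prod_mul (L := ℝ) (μ := volume.restrict (Ioi (0:ℝ)))
      (ν := volume.restrict (Ioo (-Real.pi) Real.pi))
      (f := fun r => (Real.pi * lam)⁻¹ * (r * Real.exp (-(r ^ 2) / lam) * φ r))
      (g := fun _ => (1:ℝ))
  simp only [mul_one] at key
  rw [key]
  have hθ : ∫ _ in Ioo (-Real.pi) Real.pi, (1:ℝ) = 2 * Real.pi := by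
    simp [Real.volume_Ioo]
    rw [max_eq_left (by positivity)]
    ring
  rw [hθ, MeasureTheory.integral_const_mul]
  have hI := Real.pi_ne_zero
  field_simp

lemma hasDerivAt_exp_neg_sq {lam : ℝ} (hlam : 0 < lam) (r : ℝ) :
    HasDerivAt (fun r : ℝ => Real.exp (-(r ^ 2) / lam))
      (Real.exp (-(r ^ 2) / lam) * (-(2 * r) / lam)) r := by
  have h1 : HasDerivAt (fun r : ℝ => -(r ^ 2) / lam) (-(2 * r) / lam) r := by
    simpa using ((hasDerivAt_pow 2 r).neg.div_const lam)
  exact h1.exp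

lemma R1 {lam τ τt : ℝ} (hlam : 0 < lam) (hle : τ ≤ τt) :
    ∫ r in Ico τ τt, r ^ 3 * Real.exp (-(r ^ 2) / lam)
      = (lam / 2) * ((lam + τ ^ 2) * Real.exp (-(τ ^ 2) / lam)
          - (lam + τt ^ 2) * Real.exp (-(τt ^ 2) / lam)) := by
  have hFTC : ∫ r in τ..τt, r ^ 3 * Real.exp (-(r ^ 2) / lam)
      = (-(lam / 2) * ((lam + τt ^ 2) * Real.exp (-(τt ^ 2) / lam)))
        - (-(lam / 2) * ((lam + τ ^ 2) * Real.exp (-(τ ^ 2) / lam))) := by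
    apply intervalIntegral.integral_eq_sub_of_hasDerivAt
      (f := fun r => -(lam / 2) * ((lam + r ^ 2) * Real.exp (-(r ^ 2) / lam)))
    · intro x _
      have h2 : HasDerivAt (fun r : ℝ => (lam + r ^ 2) * Real.exp (-(r ^ 2) / lam))
          ((2 * x) * Real.exp (-(x ^ 2) / lam)
            + (lam + x ^ 2) * (Real.exp (-(x ^ 2) / lam) * (-(2 * x) / lam))) x := by
        have hp : HasDerivAt (fun r : ℝ => lam + r ^ 2) (2 * x) x := by
          simpa using (hasDerivAt_pow 2 x).const_add lam
        exact hp.mul (hasDerivAt_exp_neg_sq hlam x)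
      have := h2.const_mul (-(lam / 2))
      convert this using 1
      · rfl
      field_simp
      ring
    · apply Continuous.intervalIntegrable
      fun_prop
  rw [MeasureTheory.integral_Ico_eq_integral_Ioo, ← MeasureTheory.integral_Ioc_eq_integral_Ioo,
    ← intervalIntegral.integral_of_le hle, hFTC]
  ring

lemma integrable_sq_exp {lam : ℝ} (hlam : 0 < lam) :
    Integrable (fun x : ℝ => x ^ 2 * Real.exp (-(x ^ 2) / lam)) := by
  have h := integrable_rpow_mul_exp_neg_mul_sq (b := lam⁻¹) (by positivity) (s := (2:ℝ))
    (by norm_num)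
  have heq : (fun x : ℝ => x ^ (2:ℝ) * Real.exp (-lam⁻¹ * x ^ 2))
      = fun x : ℝ => x ^ 2 * Real.exp (-(x ^ 2) / lam) := by
    funext x
    rw [show (2:ℝ) = ((2:ℕ):ℝ) by norm_num, Real.rpow_natCast,
      show -lam⁻¹ * x ^ 2 = -(x ^ 2) / lam by ring]
  rwa [heq] at h

lemma integrable_exp_sq {lam : ℝ} (hlam : 0 < lam) :
    Integrable (fun x : ℝ => Real.exp (-(x ^ 2) / lam)) := by
  have h := integrable_exp_neg_mul_sq (b := lam⁻¹) (by positivity)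
  have heq : (fun x : ℝ => Real.exp (-lam⁻¹ * x ^ 2))
      = fun x : ℝ => Real.exp (-(x ^ 2) / lam) := by
    funext x
    rw [show -lam⁻¹ * x ^ 2 = -(x ^ 2) / lam by ring]
  rwa [heq] at h

lemma tendsto_mul_exp_sq {lam : ℝ} (hlam : 0 < lam) :
    Tendsto (fun r : ℝ => r * Real.exp (-(r ^ 2) / lam)) atTop (nhds 0) := by
  have h := rpow_mul_exp_neg_mul_sq_isLittleO_exp_neg (b := lam⁻¹) (by positivity) 1
  have h0 : Tendsto (fun x : ℝ => Real.exp (-(1/2) * x)) atTop (nhds 0) := by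
    have hmul : Tendsto (fun x : ℝ => (1/2) * x) atTop atTop :=
      tendsto_id.const_mul_atTop (show (0:ℝ) < 1/2 by norm_num)
    have hcomp := Real.tendsto_exp_atBot.comp (tendsto_neg_atTop_atBot.comp hmul)
    refine hcomp.congr fun x => ?_
    simp [Function.comp]
  have h2 := h.tendsto_zero_of_tendsto h0
  have heq : (fun x : ℝ => x ^ (1:ℝ) * Real.exp (-lam⁻¹ * x ^ 2))
      = fun r : ℝ => r * Real.exp (-(r ^ 2) / lam) := by
    funext x
    rw [Real.rpow_one, show -lam⁻¹ * x ^ 2 = -(x ^ 2) / lam by ring]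
  rwa [heq] at h2

lemma R2 {lam τh : ℝ} (hlam : 0 < lam) :
    ∫ r in Ioi τh, (r ^ 2 - lam / 2) * Real.exp (-(r ^ 2) / lam)
      = (lam / 2) * τh * Real.exp (-(τh ^ 2) / lam) := by
  have hFTC := integral_Ioi_of_hasDerivAt_of_tendsto'
    (f := fun r => -(lam / 2) * (r * Real.exp (-(r ^ 2) / lam)))
    (f' := fun r => (r ^ 2 - lam / 2) * Real.exp (-(r ^ 2) / lam))
    (a := τh) (m := 0)
    ?_ ?_ ?_
  · rw [hFTC]
    ring
  · intro x _
    have h2 : HasDerivAt (fun r : ℝ => r * Real.exp (-(r ^ 2) / lam))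
        (1 * Real.exp (-(x ^ 2) / lam) + x * (Real.exp (-(x ^ 2) / lam) * (-(2 * x) / lam))) x :=
      (hasDerivAt_id x).mul (hasDerivAt_exp_neg_sq hlam x)
    have := h2.const_mul (-(lam / 2))
    convert this using 1
    · rfl
    field_simp
    ring
  · have : Integrable (fun r : ℝ => (r ^ 2 - lam / 2) * Real.exp (-(r ^ 2) / lam)) := by
      have := (integrable_sq_exp hlam).sub ((integrable_exp_sq hlam).const_mul (lam / 2))
      refine this.congr (Eventually.of_forall fun x => ?_)
      simp only [Pi.sub_apply]
      ring
    exact this.integrableOn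
  · have := (tendsto_mul_exp_sq hlam).const_mul (-(lam / 2))
    simpa using this

lemma R3 {lam τh : ℝ} (hlam : 0 < lam) :
    ∫ r in Ioi τh, Real.exp (-(r ^ 2) / lam)
      = Real.sqrt (lam / 2) * Real.sqrt (2 * Real.pi) * Qfun (τh * Real.sqrt (2 / lam)) := by
  set b := Real.sqrt (2 / lam) with hb
  have hbpos : 0 < b := Real.sqrt_pos.mpr (by positivity)
  have hbsq : b ^ 2 = 2 / lam := Real.sq_sqrt (by positivity)
  have key := integral_comp_mul_left_Ioi (fun t => Real.exp (-(t ^ 2) / 2)) τh hbpos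
  have heq : ∀ x : ℝ, Real.exp (-((b * x) ^ 2) / 2) = Real.exp (-(x ^ 2) / lam) := by
    intro x
    congr 1
    rw [mul_pow, hbsq]
    field_simp
  simp_rw [heq] at key
  rw [key]
  have hQ : Qfun (τh * b) = (1 / Real.sqrt (2 * Real.pi)) * ∫ t in Ioi (τh * b), Real.exp (-(t ^ 2) / 2) := by
    rw [Qfun, MeasureTheory.integral_const_mul]
  rw [show b * τh = τh * b by ring] at *
  rw [hQ]
  have hbinv : b⁻¹ = Real.sqrt (lam / 2) := by
    rw [hb, ← Real.sqrt_inv]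
    congr 1
    field_simp
  rw [smul_eq_mul, hbinv]
  have hs : Real.sqrt (2 * Real.pi) ≠ 0 := by positivity
  field_simp

lemma ae_inter_Ioi {a b : ℝ} (ha : 0 ≤ a) :
    (Ioi (0:ℝ) ∩ Ico a b : Set ℝ) =ᵐ[volume] (Ico a b : Set ℝ) := by
  rw [MeasureTheory.ae_eq_set]
  constructor
  · exact measure_mono_null (fun x hx => (hx.2 hx.1.2).elim) measure_empty
  · refine measure_mono_null (t := {(0:ℝ)}) (fun x hx => ?_) Real.volume_singleton
    have h1 : x ∈ Ico a b := hx.1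
    have h2 : x ∉ Ioi (0:ℝ) ∩ Ico a b := hx.2
    have hx0 : ¬ (0 < x) := fun h => h2 ⟨h, h1⟩
    have : x = 0 := le_antisymm (not_lt.mp hx0) (ha.trans h1.1)
    simp [this]

lemma ae_inter_Ioi' {a : ℝ} (ha : 0 ≤ a) :
    (Ioi (0:ℝ) ∩ Ici a : Set ℝ) =ᵐ[volume] (Ici a : Set ℝ) := by
  rw [MeasureTheory.ae_eq_set]
  constructor
  · exact measure_mono_null (fun x hx => (hx.2 hx.1.2).elim) measure_empty
  · refine measure_mono_null (t := {(0:ℝ)}) (fun x hx => ?_) Real.volume_singleton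
    have h1 : x ∈ Ici a := hx.1
    have hx0 : ¬ (0 < x) := fun h => hx.2 ⟨h, h1⟩
    have : x = 0 := le_antisymm (not_lt.mp hx0) (ha.trans h1)
    simp [this]

lemma radial_value {lam P c τ τt τh : ℝ} (hlam : 0 < lam) (hP : 0 < P) (hc : 0 < c)
    (hτ : 0 ≤ τ) (h1 : τ ≤ τt) (h2 : τt ≤ τh) :
    (2 / lam) * ∫ r in Ioi (0:ℝ), r * Real.exp (-(r ^ 2) / lam) *
        (if τh ≤ r then Real.sqrt P * r else if τt ≤ r then 0
          else if τ ≤ r then r ^ 2 / c else 0)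
      = ((lam + τ ^ 2) * Real.exp (-(τ ^ 2) / lam)
          - (lam + τt ^ 2) * Real.exp (-(τt ^ 2) / lam)) / c
        + Real.sqrt P * τh * Real.exp (-(τh ^ 2) / lam)
        + Real.sqrt (Real.pi * lam * P) * Qfun (τh * Real.sqrt (2 / lam)) := by
  have hτh0 : 0 ≤ τh := hτ.trans (h1.trans h2)
  have hind : ∀ r : ℝ, r * Real.exp (-(r ^ 2) / lam) *
        (if τh ≤ r then Real.sqrt P * r else if τt ≤ r then 0
          else if τ ≤ r then r ^ 2 / c else 0)
      = Set.indicator (Ico τ τt) (fun r => r ^ 3 * Real.exp (-(r ^ 2) / lam) / c) r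
        + Set.indicator (Ici τh) (fun r => Real.sqrt P * (r ^ 2 * Real.exp (-(r ^ 2) / lam))) r := by
    intro r
    by_cases hA : τh ≤ r
    · have hB : r ∉ Ico τ τt := fun hmem => absurd (lt_of_lt_of_le hmem.2 h2) (not_lt.mpr hA)
      rw [Set.indicator_of_notMem hB, Set.indicator_of_mem (mem_Ici.mpr hA), if_pos hA]
      ring
    · rw [Set.indicator_of_notMem (fun hmem : r ∈ Ici τh => hA hmem), if_neg hA]
      by_cases hB : τt ≤ r
      · rw [if_pos hB, Set.indicator_of_notMem (fun hmem => absurd hB (not_le.mpr hmem.2))]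
        ring
      · rw [if_neg hB]
        by_cases hC : τ ≤ r
        · rw [if_pos hC, Set.indicator_of_mem (mem_Ico.mpr ⟨hC, not_le.mp hB⟩)]
          ring
        · rw [if_neg hC, Set.indicator_of_notMem (fun hmem => hC hmem.1)]
          ring
  simp_rw [hind]
  have hint1 : IntegrableOn
      (Set.indicator (Ico τ τt) (fun r => r ^ 3 * Real.exp (-(r ^ 2) / lam) / c))
      (Ioi (0:ℝ)) volume := by
    apply Integrable.integrableOn
    apply IntegrableOn.integrable_indicator _ measurableSet_Ico
    apply IntegrableOn.mono_set (t := Icc τ τt) _ Ico_subset_Icc_self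
    apply Continuous.integrableOn_Icc
    fun_prop
  have hint2 : IntegrableOn
      (Set.indicator (Ici τh) (fun r => Real.sqrt P * (r ^ 2 * Real.exp (-(r ^ 2) / lam))))
      (Ioi (0:ℝ)) volume := by
    apply Integrable.integrableOn
    apply IntegrableOn.integrable_indicator _ measurableSet_Ici
    exact (((integrable_sq_exp hlam).const_mul (Real.sqrt P))).integrableOn
  rw [MeasureTheory.integral_add hint1 hint2]
  have hterm1 : ∫ r in Ioi (0:ℝ),
        Set.indicator (Ico τ τt) (fun r => r ^ 3 * Real.exp (-(r ^ 2) / lam) / c) r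
      = (lam / 2) * ((lam + τ ^ 2) * Real.exp (-(τ ^ 2) / lam)
          - (lam + τt ^ 2) * Real.exp (-(τt ^ 2) / lam)) / c := by
    rw [setIntegral_indicator measurableSet_Ico, setIntegral_congr_set (ae_inter_Ioi hτ),
      MeasureTheory.integral_div, R1 hlam h1]
  have hterm2 : ∫ r in Ioi (0:ℝ),
        Set.indicator (Ici τh) (fun r => Real.sqrt P * (r ^ 2 * Real.exp (-(r ^ 2) / lam))) r
      = Real.sqrt P * ((lam / 2) * τh * Real.exp (-(τh ^ 2) / lam)
          + (lam / 2) * (Real.sqrt (lam / 2) * Real.sqrt (2 * Real.pi)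
              * Qfun (τh * Real.sqrt (2 / lam)))) := by
    rw [setIntegral_indicator measurableSet_Ici, setIntegral_congr_set (ae_inter_Ioi' hτh0),
      MeasureTheory.integral_Ici_eq_integral_Ioi, MeasureTheory.integral_const_mul]
    congr 1
    have hsplit : ∫ r in Ioi τh, r ^ 2 * Real.exp (-(r ^ 2) / lam)
        = ∫ r in Ioi τh, ((r ^ 2 - lam / 2) * Real.exp (-(r ^ 2) / lam)
            + (lam / 2) * Real.exp (-(r ^ 2) / lam)) := by
      apply setIntegral_congr_fun measurableSet_Ioi
      intro r _
      ring
    rw [hsplit, MeasureTheory.integral_add]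
    · rw [R2 hlam, MeasureTheory.integral_const_mul, R3 hlam]
    · have := (integrable_sq_exp hlam).sub ((integrable_exp_sq hlam).const_mul (lam / 2))
      refine (this.congr (Eventually.of_forall fun r => ?_)).integrableOn
      simp only [Pi.sub_apply]
      ring
    · exact ((integrable_exp_sq hlam).const_mul (lam / 2)).integrableOn
  rw [hterm1, hterm2]
  have hs : Real.sqrt P * (Real.sqrt (lam / 2) * Real.sqrt (2 * Real.pi))
      = Real.sqrt (Real.pi * lam * P) := by
    rw [← Real.sqrt_mul (by positivity), ← Real.sqrt_mul (by positivity)]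
    congr 1
    ring
  rw [← hs]
  field_simp
  ring

end Aux

/-- For `s ~ CN(0, λ)` with `λ > 0`, `κ, λₚ, P > 0` and thresholds
`0 ≤ τ ≤ τ̃ ≤ τ̂`, the two-step hard-thresholded variable `x` satisfies
`E[Re(x̄·s)] = Ξ/(1+κλₚ) + √P·τ̂·e^{−τ̂²/λ} + √(πλP)·Q(τ̂·√(2/λ))` where
`Ξ = (λ + τ²)·e^{−τ²/λ} − (λ + τ̃²)·e^{−τ̃²/λ}`. -/
theorem correlation_two_step (lam κ lamp P τ τt τh : ℝ)
    (hlam : 0 < lam) (hκ : 0 < κ) (hlamp : 0 < lamp) (hP : 0 < P)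
    (hτ : 0 ≤ τ) (hττt : τ ≤ τt) (hτtτh : τt ≤ τh) :
    let x : ℝ × ℝ → ℂ := fun p =>
      if τh ≤ ‖toC p‖ then
        (Real.sqrt P : ℂ) * toC p / ((‖toC p‖ : ℝ) : ℂ)
      else if τt ≤ ‖toC p‖ then 0
      else if τ ≤ ‖toC p‖ then toC p / ((1 + κ * lamp : ℝ) : ℂ)
      else 0
    let Ξ : ℝ := (lam + τ ^ 2) * Real.exp (-(τ ^ 2) / lam)
      - (lam + τt ^ 2) * Real.exp (-(τt ^ 2) / lam)
    (∫ p : ℝ × ℝ, ((starRingEnd ℂ) (x p) * toC p).re ∂(complexGaussian lam))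
      = Ξ / (1 + κ * lamp) + Real.sqrt P * τh * Real.exp (-(τh ^ 2) / lam)
        + Real.sqrt (Real.pi * lam * P) * Qfun (τh * Real.sqrt (2 / lam)) := by
  intro x Ξ
  have hc : (0:ℝ) < 1 + κ * lamp := by positivity
  set φ0 : ℝ → ℝ := fun r => if τh ≤ r then Real.sqrt P * r else if τt ≤ r then 0
      else if τ ≤ r then r ^ 2 / (1 + κ * lamp) else 0 with hφ0
  have hpt : ∀ p : ℝ × ℝ, ((starRingEnd ℂ) (x p) * toC p).re = φ0 (‖toC p‖) := by
    intro p
    have e2 : (starRingEnd ℂ) (toC p) * toC p = ((‖toC p‖ ^ 2 : ℝ) : ℂ) := by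
      rw [mul_comm, Complex.mul_conj, ← Complex.sq_norm]
    show ((starRingEnd ℂ) (if τh ≤ ‖toC p‖ then
        (Real.sqrt P : ℂ) * toC p / ((‖toC p‖ : ℝ) : ℂ)
      else if τt ≤ ‖toC p‖ then 0
      else if τ ≤ ‖toC p‖ then toC p / ((1 + κ * lamp : ℝ) : ℂ)
      else 0) * toC p).re
      = if τh ≤ ‖toC p‖ then Real.sqrt P * ‖toC p‖
        else if τt ≤ ‖toC p‖ then 0
        else if τ ≤ ‖toC p‖ then ‖toC p‖ ^ 2 / (1 + κ * lamp) else 0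
    split_ifs with h1 h2 h3
    · rcases eq_or_ne (‖toC p‖) 0 with h0 | h0
      · have hz : toC p = 0 := by rwa [norm_eq_zero] at h0
        simp [hz, h0]
      · have key : (starRingEnd ℂ) ((Real.sqrt P : ℂ) * toC p / ((‖toC p‖ : ℝ) : ℂ))
            * toC p = ((Real.sqrt P * ‖toC p‖ : ℝ) : ℂ) := by
          rw [map_div₀, map_mul, Complex.conj_ofReal, Complex.conj_ofReal,
            div_mul_eq_mul_div, mul_assoc, e2]
          push_cast
          rw [div_eq_iff (show ((‖toC p‖ : ℝ) : ℂ) ≠ 0 by exact_mod_cast h0)]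
          ring
        rw [key, Complex.ofReal_re]
    · simp
    · rw [map_div₀, Complex.conj_ofReal, div_mul_eq_mul_div, e2, ← Complex.ofReal_div,
        Complex.ofReal_re]
    · simp
  have hcong : (∫ p : ℝ × ℝ, ((starRingEnd ℂ) (x p) * toC p).re ∂(complexGaussian lam))
      = ∫ p : ℝ × ℝ, φ0 (‖toC p‖) ∂(complexGaussian lam) :=
    integral_congr_ae (Filter.Eventually.of_forall hpt)
  rw [hcong, integral_radial hlam]
  exact radial_value hlam hP hc hτ hττt hτtτh
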